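/- Let a, b, c, α : (−∞, η) → ℝ be a maximal solution of the E(2) centrally flat ODE system a' = (a/2)(−a² + c²), b' = (b/2)(a² + c²), c' = (c/2)(a² − c² + 2α), α' = α·c², with a, b, c, α everywhere positive, satisfying 0 ≤ c(t)² − a(t)² ≤ 2α(t) for all t, and such that (a(t), b(t), c(t), α(t)) → (q, 0, q, 0) as t → −∞ for some q > 0. Then the function a·b is unbounded above on (−∞, η); moreover 2α(t) ≥ c(t)² − q² for all t ∈ (−∞, η). -/

import Mathlib

/-- The E(2) centrally flat ODE system on a set `J`: `a' = (a/2)(−a² + c²)`,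
`b' = (b/2)(a² + c²)`, `c' = (c/2)(a² − c² + 2α)`, `α' = α·c²`. -/
def E2CentrallyFlatSystem (a b c α : ℝ → ℝ) (J : Set ℝ) : Prop :=
  (∀ t ∈ J, HasDerivAt a (a t / 2 * (-(a t) ^ 2 + (c t) ^ 2)) t) ∧
  (∀ t ∈ J, HasDerivAt b (b t / 2 * ((a t) ^ 2 + (c t) ^ 2)) t) ∧
  (∀ t ∈ J, HasDerivAt c (c t / 2 * ((a t) ^ 2 - (c t) ^ 2 + 2 * α t)) t) ∧
  (∀ t ∈ J, HasDerivAt α (α t * (c t) ^ 2) t)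

/-- A solution of the E(2) centrally flat ODE system on an open interval `I` is maximal
if it does not extend to a solution of the same system on any open interval strictly
containing `I`. -/
def E2MaximalSolution (a b c α : ℝ → ℝ) (I : Set ℝ) : Prop :=
  E2CentrallyFlatSystem a b c α I ∧
  ∀ J : Set ℝ, IsOpen J → J.OrdConnected → I ⊆ J → I ≠ J →
    ¬ ∃ a' b' c' α' : ℝ → ℝ, E2CentrallyFlatSystem a' b' c' α' J ∧
      Set.EqOn a' a I ∧ Set.EqOn b' b I ∧ Set.EqOn c' c I ∧ Set.EqOn α' α I

open Set Filter

private lemma hasDerivAt_fst' {F G : Type*} [NormedAddCommGroup F] [NormedSpace ℝ F]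
    [NormedAddCommGroup G] [NormedSpace ℝ G] {f : ℝ → F × G} {v : F × G} {t : ℝ}
    (h : HasDerivAt f v t) : HasDerivAt (fun t => (f t).1) v.1 t := by
  rw [hasDerivAt_iff_hasFDerivAt] at h ⊢
  exact h.fst

private lemma hasDerivAt_snd' {F G : Type*} [NormedAddCommGroup F] [NormedSpace ℝ F]
    [NormedAddCommGroup G] [NormedSpace ℝ G] {f : ℝ → F × G} {v : F × G} {t : ℝ}
    (h : HasDerivAt f v t) : HasDerivAt (fun t => (f t).2) v.2 t := by
  rw [hasDerivAt_iff_hasFDerivAt] at h ⊢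
  exact h.snd

private lemma monoOn_Iio {η : ℝ} {f f' : ℝ → ℝ} (hf : ∀ t ∈ Iio η, HasDerivAt f (f' t) t)
    (h0 : ∀ t ∈ Iio η, 0 ≤ f' t) : MonotoneOn f (Iio η) := by
  apply monotoneOn_of_deriv_nonneg (convex_Iio η)
  · exact fun t ht => (hf t ht).continuousAt.continuousWithinAt
  · rw [interior_Iio]; exact fun t ht => (hf t ht).differentiableAt.differentiableWithinAt
  · rw [interior_Iio]; intro t ht; rw [(hf t ht).deriv]; exact h0 t ht

private lemma antiOn_Iio {η : ℝ} {f f' : ℝ → ℝ} (hf : ∀ t ∈ Iio η, HasDerivAt f (f' t) t)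
    (h0 : ∀ t ∈ Iio η, f' t ≤ 0) : AntitoneOn f (Iio η) := by
  apply antitoneOn_of_deriv_nonpos (convex_Iio η)
  · exact fun t ht => (hf t ht).continuousAt.continuousWithinAt
  · rw [interior_Iio]; exact fun t ht => (hf t ht).differentiableAt.differentiableWithinAt
  · rw [interior_Iio]; intro t ht; rw [(hf t ht).deriv]; exact h0 t ht

private lemma constOn_Iio {η : ℝ} {f : ℝ → ℝ} (hf : ∀ t ∈ Iio η, HasDerivAt f 0 t)
    {s t : ℝ} (hs : s ∈ Iio η) (ht : t ∈ Iio η) : f s = f t := by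
  have hm := monoOn_Iio (f' := fun _ => 0) hf (fun _ _ => le_rfl)
  have ha := antiOn_Iio (f' := fun _ => 0) hf (fun _ _ => le_rfl)
  rcases le_total s t with h | h
  · exact le_antisymm (hm hs ht h) (ha hs ht h)
  · exact le_antisymm (ha ht hs h) (hm ht hs h)

noncomputable def Fvec : ℝ × ℝ × ℝ × ℝ → ℝ × ℝ × ℝ × ℝ := fun p =>
  (p.1 / 2 * (-p.1 ^ 2 + p.2.2.1 ^ 2),
   p.2.1 / 2 * (p.1 ^ 2 + p.2.2.1 ^ 2),
   p.2.2.1 / 2 * (p.1 ^ 2 - p.2.2.1 ^ 2 + 2 * p.2.2.2),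
   p.2.2.2 * p.2.2.1 ^ 2)

lemma Fvec_contDiff : ContDiff ℝ 1 Fvec := by unfold Fvec; fun_prop (disch := norm_num)



/-- For a maximal positive solution of the E(2) centrally flat system on
`(−∞, η)` satisfying `0 ≤ c² − a² ≤ 2α` throughout and converging to `(q, 0, q, 0)`
with `q > 0` as `t → −∞`, the product `a·b` is unbounded above on `(−∞, η)`, and
`2α(t) ≥ c(t)² − q²` for all `t < η`. -/
theorem e2_unstable_curve_ab_unbounded
    (η q : ℝ) (hq : 0 < q)
    (a b c α : ℝ → ℝ)
    (hmax : E2MaximalSolution a b c α (Set.Iio η))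
    (hapos : ∀ t ∈ Set.Iio η, 0 < a t) (hbpos : ∀ t ∈ Set.Iio η, 0 < b t)
    (hcpos : ∀ t ∈ Set.Iio η, 0 < c t) (hαpos : ∀ t ∈ Set.Iio η, 0 < α t)
    (hineq : ∀ t ∈ Set.Iio η,
      0 ≤ (c t) ^ 2 - (a t) ^ 2 ∧ (c t) ^ 2 - (a t) ^ 2 ≤ 2 * α t)
    (hlima : Filter.Tendsto a Filter.atBot (nhds q))
    (hlimb : Filter.Tendsto b Filter.atBot (nhds 0))
    (hlimc : Filter.Tendsto c Filter.atBot (nhds q))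
    (hlimα : Filter.Tendsto α Filter.atBot (nhds 0)) :
    ¬ BddAbove ((fun t => a t * b t) '' Set.Iio η) ∧
    ∀ t ∈ Set.Iio η, (c t) ^ 2 - q ^ 2 ≤ 2 * α t := by
  obtain ⟨⟨hda, hdb, hdc, hdα⟩, hmaxext⟩ := hmax
  -- Part 2
  have hpart2 : ∀ t ∈ Set.Iio η, (c t) ^ 2 - q ^ 2 ≤ 2 * α t := by
    have hdφ : ∀ t ∈ Iio η, HasDerivAt (fun t => 2 * α t - c t ^ 2 + q ^ 2)
        (c t ^ 2 * (c t ^ 2 - a t ^ 2)) t := by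
      intro t ht
      have h1 := ((hdα t ht).const_mul 2).sub ((hdc t ht).pow 2)
      have h2 := h1.add_const (q ^ 2)
      refine h2.congr_deriv ?_
      ring
    have hmono := monoOn_Iio hdφ (fun t ht => by
      have h1 := (hineq t ht).1
      have h2 := (hcpos t ht)
      positivity)
    have hlim0 : Tendsto (fun t => 2 * α t - c t ^ 2 + q ^ 2) atBot (nhds 0) := by
      have := (((hlimα.const_mul 2).sub (hlimc.pow 2)).add_const (q ^ 2))
      simpa using this
    intro t ht
    have hge : 0 ≤ 2 * α t - c t ^ 2 + q ^ 2 := by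
      refine le_of_tendsto hlim0 ?_
      refine Filter.eventually_atBot.mpr ⟨t, fun s hs => ?_⟩
      exact hmono (lt_of_le_of_lt hs ht) ht hs
    linarith
  refine ⟨?_, hpart2⟩
  -- Part 1
  intro hB
  obtain ⟨B, hBmem⟩ := hB
  have hBub : ∀ t ∈ Iio η, a t * b t ≤ B := fun t ht => hBmem ⟨t, ht, rfl⟩
  set t₁ : ℝ := η - 1 with ht₁def
  have ht₁ : t₁ ∈ Iio η := mem_Iio.mpr (by rw [ht₁def]; linarith)
  have hamono : MonotoneOn a (Iio η) := by
    refine monoOn_Iio hda (fun t ht => ?_)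
    have h1 := (hineq t ht).1
    have h2 := (hapos t ht)
    nlinarith
  have haq : ∀ t ∈ Iio η, q ≤ a t := by
    intro t ht
    refine le_of_tendsto hlima ?_
    exact Filter.eventually_atBot.mpr ⟨t, fun s hs => hamono (lt_of_le_of_lt hs ht) ht hs⟩
  have hBpos : 0 < B :=
    lt_of_lt_of_le (mul_pos (hapos t₁ ht₁) (hbpos t₁ ht₁)) (hBub t₁ ht₁)
  have hbB : ∀ t ∈ Iio η, b t ≤ B / q := by
    intro t ht
    have h1 : b t = a t * b t / a t := (mul_div_cancel_left₀ (b t) (hapos t ht).ne').symm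
    rw [h1]
    exact div_le_div₀ hBpos.le (hBub t ht) hq (haq t ht)
  have habpos : ∀ t ∈ Iio η, 0 < a t * b t := fun t ht => mul_pos (hapos t ht) (hbpos t ht)
  have hdab : ∀ t ∈ Iio η, HasDerivAt (fun t => a t * b t) (a t * b t * c t ^ 2) t := by
    intro t ht
    have := (hda t ht).mul (hdb t ht)
    refine this.congr_deriv ?_
    ring
  have hratio : ∀ t ∈ Iio η, α t * (a t₁ * b t₁) = α t₁ * (a t * b t) := by
    have hdg : ∀ t ∈ Iio η, HasDerivAt (fun t => α t / (a t * b t)) 0 t := by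
      intro t ht
      have h1 := (hdα t ht).div (hdab t ht) (habpos t ht).ne'
      refine h1.congr_deriv ?_
      rw [div_eq_zero_iff]
      left; ring
    intro t ht
    have h2 := constOn_Iio hdg ht ht₁
    rwa [div_eq_div_iff (habpos t ht).ne' (habpos t₁ ht₁).ne'] at h2
  set A : ℝ := α t₁ * B / (a t₁ * b t₁) with hAdef
  have hApos : 0 < A := div_pos (mul_pos (hαpos t₁ ht₁) hBpos) (habpos t₁ ht₁)
  have hαA : ∀ t ∈ Iio η, α t ≤ A := by
    intro t ht
    rw [hAdef, le_div_iff₀ (habpos t₁ ht₁)]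
    calc α t * (a t₁ * b t₁) = α t₁ * (a t * b t) := hratio t ht
      _ ≤ α t₁ * B := by
          exact mul_le_mul_of_nonneg_left (hBub t ht) (hαpos t₁ ht₁).le
  have hc2 : ∀ t ∈ Iio η, c t ^ 2 ≤ a t ^ 2 + 2 * A := by
    intro t ht
    have := (hineq t ht).2
    have := hαA t ht
    linarith
  set Ma : ℝ := a t₁ * Real.exp A with hMadef
  have hMapos : 0 < Ma := mul_pos (hapos t₁ ht₁) (Real.exp_pos A)
  have haMa : ∀ t ∈ Iio η, a t ≤ Ma := by
    have hdψ : ∀ t ∈ Iio η, HasDerivAt (fun t => Real.log (a t) - A * t)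
        ((-(a t) ^ 2 + c t ^ 2) / 2 - A) t := by
      intro t ht
      have ha0 : a t ≠ 0 := (hapos t ht).ne'
      have h1 := ((hda t ht).log ha0).sub ((hasDerivAt_id t).const_mul A)
      refine h1.congr_deriv ?_
      rw [mul_one]
      congr 1
      field_simp
    have hanti : AntitoneOn (fun t => Real.log (a t) - A * t) (Iio η) := by
      refine antiOn_Iio hdψ (fun t ht => ?_)
      have h1 := (hineq t ht).2
      have h2 := hαA t ht
      linarith
    intro t ht
    rcases le_total t t₁ with h | h
    · calc a t ≤ a t₁ := hamono ht ht₁ h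
        _ ≤ Ma := by
            rw [hMadef]
            nlinarith [Real.one_le_exp hApos.le, hapos t₁ ht₁]
    · have h2 := hanti ht₁ ht h
      simp only at h2
      have h3 : Real.log (a t) ≤ Real.log (a t₁) + A := by
        have : A * t - A * t₁ ≤ A := by
          have : t - t₁ ≤ 1 := by rw [ht₁def]; simp [mem_Iio] at ht; linarith
          nlinarith
        linarith
      calc a t = Real.exp (Real.log (a t)) := (Real.exp_log (hapos t ht)).symm
        _ ≤ Real.exp (Real.log (a t₁) + A) := Real.exp_le_exp.mpr h3
        _ = Ma := by rw [Real.exp_add, Real.exp_log (hapos t₁ ht₁), hMadef]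
  set Mc : ℝ := Real.sqrt (Ma ^ 2 + 2 * A) with hMcdef
  have hcMc : ∀ t ∈ Iio η, c t ≤ Mc := by
    intro t ht
    have h1 : c t ^ 2 ≤ Ma ^ 2 + 2 * A := by
      have := hc2 t ht
      nlinarith [haMa t ht, hapos t ht]
    calc c t = Real.sqrt (c t ^ 2) := by
          rw [Real.sqrt_sq (hcpos t ht).le]
      _ ≤ Mc := Real.sqrt_le_sqrt h1
  -- the orbit as a curve in ℝ⁴ and its norm bound
  set X : ℝ → ℝ × ℝ × ℝ × ℝ := fun t => (a t, b t, c t, α t) with hXdef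
  set R₀ : ℝ := max Ma (max (B / q) (max Mc A)) with hR₀def
  have hR₀pos : 0 < R₀ := lt_of_lt_of_le hMapos (le_max_left _ _)
  have hXbound : ∀ t ∈ Iio η, ‖X t‖ ≤ R₀ := by
    intro t ht
    have h1 : |a t| ≤ Ma := by rw [abs_of_pos (hapos t ht)]; exact haMa t ht
    have h2 : |b t| ≤ B / q := by rw [abs_of_pos (hbpos t ht)]; exact hbB t ht
    have h3 : |c t| ≤ Mc := by rw [abs_of_pos (hcpos t ht)]; exact hcMc t ht
    have h4 : |α t| ≤ A := by rw [abs_of_pos (hαpos t ht)]; exact hαA t ht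
    have : ‖X t‖ = max |a t| (max |b t| (max |c t| |α t|)) := by
      simp [hXdef, Prod.norm_def, Real.norm_eq_abs]
    rw [this, hR₀def]
    exact max_le_max h1 (max_le_max h2 (max_le_max h3 h4))
  -- Lipschitz and norm-bound data for the vector field on a large closed ball
  set sBall : Set (ℝ × ℝ × ℝ × ℝ) := Metric.closedBall 0 (3 * R₀ + 1) with hsBdef
  have hsBcompact : IsCompact sBall := isCompact_closedBall _ _
  obtain ⟨Cf, hCf⟩ := hsBcompact.exists_bound_of_continuousOn
    ((Fvec_contDiff.continuous_fderiv one_ne_zero).continuousOn)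
  set L : NNReal := Real.toNNReal Cf with hLdef
  have hLip : LipschitzOnWith L Fvec sBall := by
    refine Convex.lipschitzOnWith_of_nnnorm_fderiv_le
      (fun x _ => (Fvec_contDiff.differentiable one_ne_zero).differentiableAt)
      (fun x hx => ?_) (convex_closedBall _ _)
    have h1 := hCf x hx
    have h2 : ‖fderiv ℝ Fvec x‖ ≤ (L : ℝ) :=
      le_trans h1 (by rw [hLdef]; exact Real.le_coe_toNNReal Cf)
    exact_mod_cast h2
  obtain ⟨C0, hC0⟩ := hsBcompact.exists_bound_of_continuousOn
    ((Fvec_contDiff.continuous).continuousOn)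
  set C : ℝ := max C0 0 + 1 with hCdef
  have hCpos : 0 < C := by positivity
  have hCbound : ∀ x ∈ sBall, ‖Fvec x‖ ≤ C := fun x hx =>
    le_trans (hC0 x hx) (by rw [hCdef]; nlinarith [le_max_left C0 (0:ℝ)])
  -- setup of the Picard–Lindelöf data
  set R : ℝ := 2 * R₀ + 1 with hRdef
  have hRpos : 0 < R := by positivity
  set τ : ℝ := R / (2 * C) with hτdef
  have hτpos : 0 < τ := by positivity
  set t₀ : ℝ := η - τ / 2 with ht₀def
  have ht₀ : t₀ ∈ Iio η := mem_Iio.mpr (by rw [ht₀def]; linarith)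
  set tMax : ℝ := t₀ + τ with htMaxdef
  have hηtMax : η < tMax := by rw [htMaxdef, ht₀def]; linarith
  set x₀ : ℝ × ℝ × ℝ × ℝ := X t₀ with hx₀def
  have hx₀R₀ : ‖x₀‖ ≤ R₀ := hXbound t₀ ht₀
  have hsub : Metric.closedBall x₀ R ⊆ sBall := by
    intro y hy
    rw [hsBdef, Metric.mem_closedBall, dist_zero_right]
    calc ‖y‖ ≤ ‖y - x₀‖ + ‖x₀‖ := by
          have := norm_add_le (y - x₀) x₀; simpa using this
      _ ≤ R + R₀ := add_le_add (by rwa [Metric.mem_closedBall, dist_eq_norm] at hy) hx₀R₀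
      _ ≤ 3 * R₀ + 1 := by rw [hRdef]; linarith
  have hPL : IsPicardLindelof (fun _ x => Fvec x) (tmin := t₀) (tmax := tMax)
      ⟨t₀, left_mem_Icc.mpr (by rw [htMaxdef]; linarith)⟩ x₀ R.toNNReal 0 C.toNNReal L :=
    { lipschitzOnWith := fun t _ => by
        rw [Real.coe_toNNReal _ hRpos.le]
        exact hLip.mono hsub
      continuousOn := fun x _ => continuousOn_const
      norm_le := fun t _ x hx => by
        rw [Real.coe_toNNReal _ hRpos.le] at hx
        rw [Real.coe_toNNReal _ hCpos.le]
        exact hCbound x (hsub hx)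
      mul_max_le := by
        have hmax : max (tMax - t₀) (t₀ - t₀) = τ := by
          rw [htMaxdef, add_sub_cancel_left, sub_self, max_eq_left hτpos.le]
        have hCτ : C * τ ≤ R := by
          rw [hτdef, mul_div_assoc', div_le_iff₀ (by positivity)]
          nlinarith
        simp only [Real.coe_toNNReal _ hCpos.le, Real.coe_toNNReal _ hRpos.le, NNReal.coe_zero,
          sub_zero]
        rw [hmax]
        exact hCτ
        }
  obtain ⟨f, hf0', hfd⟩ := hPL.exists_eq_forall_mem_Icc_hasDerivWithinAt₀
  have hf0 : f t₀ = x₀ := hf0'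
  have hfc : ContinuousOn f (Icc t₀ tMax) := fun t ht => (hfd t ht).continuousWithinAt
  -- the Picard solution stays in the closed ball of radius R around x₀
  have hball : ∀ t ∈ Icc t₀ tMax, f t ∈ Metric.closedBall x₀ R := by
    by_contra hbad
    push_neg at hbad
    set Bad : Set ℝ := Icc t₀ tMax ∩ (fun t => dist (f t) x₀) ⁻¹' (Ici R) with hBaddef
    have hdistc : ContinuousOn (fun t => dist (f t) x₀) (Icc t₀ tMax) :=
      (Continuous.dist continuous_id continuous_const).comp_continuousOn hfc
    have hBadclosed : IsClosed Bad :=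
      hdistc.preimage_isClosed_of_isClosed isClosed_Icc isClosed_Ici
    obtain ⟨tb, htb, htb2⟩ := hbad
    rw [Metric.mem_closedBall, not_le] at htb2
    have hBadne : Bad.Nonempty := ⟨tb, htb, le_of_lt htb2⟩
    have hBadbdd : BddBelow Bad := ⟨t₀, fun u hu => hu.1.1⟩
    set T : ℝ := sInf Bad with hTdef
    have hTmem : T ∈ Bad := hBadclosed.csInf_mem hBadne hBadbdd
    have hTIcc : T ∈ Icc t₀ tMax := hTmem.1
    have hTdist : R ≤ dist (f T) x₀ := hTmem.2
    have hT0 : t₀ < T := by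
      rcases lt_or_eq_of_le hTIcc.1 with h | h
      · exact h
      · exfalso
        rw [← h, hf0, dist_self] at hTdist
        linarith
    have hgood : ∀ u ∈ Ico t₀ T, dist (f u) x₀ ≤ R := by
      intro u hu
      by_contra hcon
      push_neg at hcon
      have hmem : u ∈ Bad := ⟨⟨hu.1, le_trans hu.2.le hTIcc.2⟩, le_of_lt hcon⟩
      exact absurd hu.2 (not_lt.mpr (csInf_le hBadbdd hmem))
    have hhalf : ∀ u ∈ Ico t₀ T, dist (f u) x₀ ≤ R / 2 := by
      intro u hu
      have hsub2 : Icc t₀ u ⊆ Icc t₀ tMax := Icc_subset_Icc_right (le_trans hu.2.le hTIcc.2)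
      have hsub3 : Icc t₀ u ⊆ Ico t₀ T := fun x hx => ⟨hx.1, lt_of_le_of_lt hx.2 hu.2⟩
      have key := Convex.norm_image_sub_le_of_norm_hasDerivWithin_le
        (f := f) (f' := fun t => Fvec (f t)) (C := C) (s := Icc t₀ u)
        (fun x hx => (hfd x (hsub2 hx)).mono hsub2)
        (fun x hx => hCbound (f x)
          (hsub (Metric.mem_closedBall.mpr (hgood x (hsub3 hx)))))
        (convex_Icc _ _) (left_mem_Icc.mpr hu.1) (right_mem_Icc.mpr hu.1)
      rw [hf0] at key
      have h5 : ‖u - t₀‖ = u - t₀ := by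
        rw [Real.norm_eq_abs, abs_of_nonneg (by linarith [hu.1])]
      rw [h5] at key
      have h6 : u - t₀ ≤ τ := by
        have := lt_of_lt_of_le hu.2 hTIcc.2
        rw [htMaxdef] at this
        linarith
      have h7 : C * (u - t₀) ≤ C * τ := mul_le_mul_of_nonneg_left h6 hCpos.le
      have h8 : C * τ = R / 2 := by
        rw [hτdef]
        field_simp
      rw [dist_eq_norm]
      calc ‖f u - x₀‖ ≤ C * (u - t₀) := key
        _ ≤ C * τ := h7
        _ = R / 2 := h8
    haveI hNB : (nhdsWithin T (Ico t₀ T)).NeBot :=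
      mem_closure_iff_nhdsWithin_neBot.mp
        (by rw [closure_Ico hT0.ne]; exact right_mem_Icc.mpr hT0.le)
    have htend : Tendsto (fun u => dist (f u) x₀) (nhdsWithin T (Ico t₀ T))
        (nhds (dist (f T) x₀)) := by
      refine Tendsto.dist ?_ tendsto_const_nhds
      exact (hfc T hTIcc).mono (fun u hu => ⟨hu.1, le_trans hu.2.le hTIcc.2⟩)
    have hfTle : dist (f T) x₀ ≤ R / 2 :=
      le_of_tendsto htend (eventually_nhdsWithin_of_forall hhalf)
    linarith
  have hfsB : ∀ t ∈ Icc t₀ tMax, f t ∈ sBall := fun t ht => hsub (hball t ht)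
  have hXsB : ∀ t ∈ Iio η, X t ∈ sBall := by
    intro t ht
    rw [hsBdef, Metric.mem_closedBall, dist_zero_right]
    linarith [hXbound t ht, hR₀pos]
  have hXd : ∀ t ∈ Iio η, HasDerivAt X (Fvec (X t)) t := by
    intro t ht
    have h := (hda t ht).prodMk ((hdb t ht).prodMk ((hdc t ht).prodMk (hdα t ht)))
    have hF : Fvec (X t) = (a t / 2 * (-(a t) ^ 2 + (c t) ^ 2),
        b t / 2 * ((a t) ^ 2 + (c t) ^ 2),
        c t / 2 * ((a t) ^ 2 - (c t) ^ 2 + 2 * α t), α t * (c t) ^ 2) := by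
      simp [Fvec, hXdef]
    rw [hF]
    exact h
  have huniq : ∀ u ∈ Ico t₀ η, X u = f u := by
    intro u hu
    have huη : u ∈ Iio η := hu.2
    have hutMax : u ≤ tMax := le_trans hu.2.le hηtMax.le
    have hmemη : ∀ s ∈ Icc t₀ u, s ∈ Iio η := fun s hs => lt_of_le_of_lt hs.2 huη
    have key := ODE_solution_unique_of_mem_Icc_right
      (v := fun _ x => Fvec x) (s := fun _ => sBall) (K := L)
      (fun _ _ => hLip)
      (fun s hs => (hXd s (hmemη s hs)).continuousAt.continuousWithinAt)
      (fun s hs => (hXd s (hmemη s ⟨hs.1, hs.2.le⟩)).hasDerivWithinAt)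
      (fun s hs => hXsB s (hmemη s ⟨hs.1, hs.2.le⟩))
      (hfc.mono (Icc_subset_Icc_right hutMax))
      (fun s hs => (hfd s ⟨hs.1, le_trans hs.2.le hutMax⟩).mono_of_mem_nhdsWithin
        (Icc_mem_nhdsGE_of_mem ⟨hs.1, lt_of_lt_of_le hs.2 hutMax⟩))
      (fun s hs => hfsB s ⟨hs.1, le_trans hs.2.le hutMax⟩)
      hf0.symm
    exact key (right_mem_Icc.mpr hu.1)
  -- glue the two solutions
  set Y : ℝ → ℝ × ℝ × ℝ × ℝ := fun t => if t < η then X t else f t with hYdef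
  have hYX : ∀ t ∈ Iio η, Y t = X t := fun t ht => if_pos ht
  have hYf : ∀ t ∈ Ioo t₀ tMax, Y t = f t := by
    intro t ht
    by_cases h : t < η
    · rw [hYdef]
      simp only [if_pos h]
      exact huniq t ⟨ht.1.le, h⟩
    · rw [hYdef]
      simp only [if_neg h]
  have hYd : ∀ t ∈ Iio tMax, HasDerivAt Y (Fvec (Y t)) t := by
    intro t ht
    by_cases h : t < η
    · have h1 := hXd t h
      have h2 : Y =ᶠ[nhds t] X := Filter.eventuallyEq_of_mem (Iio_mem_nhds h) hYX
      have h3 := h1.congr_of_eventuallyEq h2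
      rwa [← hYX t h] at h3
    · push_neg at h
      have ht2 : t ∈ Ioo t₀ tMax := ⟨lt_of_lt_of_le ht₀ h, ht⟩
      have h1 : HasDerivAt f (Fvec (f t)) t :=
        (hfd t ⟨ht2.1.le, ht2.2.le⟩).hasDerivAt (Icc_mem_nhds ht2.1 ht2.2)
      have h2 : Y =ᶠ[nhds t] f := Filter.eventuallyEq_of_mem (isOpen_Ioo.mem_nhds ht2) hYf
      have h3 := h1.congr_of_eventuallyEq h2
      rwa [← hYf t ht2] at h3
  set a' : ℝ → ℝ := fun t => (Y t).1 with ha'def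
  set b' : ℝ → ℝ := fun t => (Y t).2.1 with hb'def
  set c' : ℝ → ℝ := fun t => (Y t).2.2.1 with hc'def
  set α' : ℝ → ℝ := fun t => (Y t).2.2.2 with hα'def
  have hcomp : ∀ t ∈ Iio tMax,
      HasDerivAt a' ((Fvec (Y t)).1) t ∧ HasDerivAt b' ((Fvec (Y t)).2.1) t ∧
      HasDerivAt c' ((Fvec (Y t)).2.2.1) t ∧ HasDerivAt α' ((Fvec (Y t)).2.2.2) t := by
    intro t ht
    have h := hYd t ht
    exact ⟨hasDerivAt_fst' h, hasDerivAt_fst' (hasDerivAt_snd' h),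
      hasDerivAt_fst' (hasDerivAt_snd' (hasDerivAt_snd' h)),
      hasDerivAt_snd' (hasDerivAt_snd' (hasDerivAt_snd' h))⟩
  have hsys : E2CentrallyFlatSystem a' b' c' α' (Iio tMax) := by
    refine ⟨fun t ht => ?_, fun t ht => ?_, fun t ht => ?_, fun t ht => ?_⟩
    · exact (hcomp t ht).1
    · exact (hcomp t ht).2.1
    · exact (hcomp t ht).2.2.1
    · exact (hcomp t ht).2.2.2
  have heq1 : EqOn a' a (Iio η) := fun t ht => by
    show (Y t).1 = a t
    rw [hYX t ht]
  have heq2 : EqOn b' b (Iio η) := fun t ht => by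
    show (Y t).2.1 = b t
    rw [hYX t ht]
  have heq3 : EqOn c' c (Iio η) := fun t ht => by
    show (Y t).2.2.1 = c t
    rw [hYX t ht]
  have heq4 : EqOn α' α (Iio η) := fun t ht => by
    show (Y t).2.2.2 = α t
    rw [hYX t ht]
  have hne : Iio η ≠ Iio tMax := by
    intro h
    have h2 : η ∈ Iio tMax := hηtMax
    rw [← h] at h2
    exact lt_irrefl η h2
  exact hmaxext (Iio tMax) isOpen_Iio Set.ordConnected_Iio (Iio_subset_Iio hηtMax.le) hne
    ⟨a', b', c', α', hsys, heq1, heq2, heq3, heq4⟩
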